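/- For 0 ≤ ν ≤ l, the ν-th q^{-1}-derivative with respect to y of a_l(x,y;m) = [x+(q^m-1)y]^{[l]} equals β(l,ν) q^{-σ_ν} α(m,ν) a_{l-ν}(x,y;m-ν), and the ν-th q^{-1}-derivative of b_l(x,y;m) = (x-y)^{[l]} equals (-1)^ν β(l,ν) b_{l-ν}(x,y;m). -/

import Mathlib

noncomputable section

/-- `alphaQ q a u = ∏_{i=0}^{u-1} (q^a - q^i)`, with integer exponent `a`. -/
def alphaQ (q : ℚ) (a : ℤ) (u : ℕ) : ℚ :=
  ∏ i ∈ Finset.range u, (q ^ a - q ^ (i : ℤ))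

/-- The Gaussian binomial `[a choose b]_q = α(a,b)/α(b,b)`. -/
def gaussQ (q : ℚ) (a b : ℕ) : ℚ := alphaQ q a b / alphaQ q b b

/-- `sig l = l(l-1)/2`. -/
def sig (l : ℕ) : ℕ := l * (l - 1) / 2

/-- `betaQ q a u = ∏_{i=0}^{u-1} (q^(a-i) - 1)/(q - 1)` (natural subtraction in the
exponent). -/
def betaQ (q : ℚ) (a u : ℕ) : ℚ :=
  ∏ i ∈ Finset.range u, (q ^ (a - i) - 1) / (q - 1)

/-- A homogeneous polynomial in `x, y` of degree `deg`, whose coefficients depend on an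
integer parameter `m`: `coeff m i` is the coefficient of `y^i x^(deg - i)` (coefficients
with `i > deg` are regarded as zero). -/
structure QPoly where
  deg : ℕ
  coeff : ℤ → ℕ → ℚ

/-- The q-product `a * b`: a homogeneous polynomial of degree `r + s` whose coefficient of
`y^u x^(r+s-u)` is `∑_{i=0}^u q^(i·s) aᵢ(m) b_{u-i}(m-i)`, where `s` is the degree of `b`. -/
def qMul (q : ℚ) (a b : QPoly) : QPoly :=
  ⟨a.deg + b.deg, fun m u =>
    ∑ i ∈ Finset.range (u + 1), q ^ (i * b.deg) * a.coeff m i * b.coeff (m - i) (u - i)⟩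

/-- The constant polynomial `1`. -/
def qOne : QPoly := ⟨0, fun _ u => if u = 0 then 1 else 0⟩

/-- The `l`-th q-power: `a^[0] = 1` and `a^[l] = a^[l-1] * a`. -/
def qPow (q : ℚ) (a : QPoly) : ℕ → QPoly
  | 0 => qOne
  | l + 1 => qMul q (qPow q a l) a

/-- Evaluation of a homogeneous polynomial at `(x, y)`, with parameter `m`. -/
def QPoly.eval (a : QPoly) (m : ℤ) (x y : ℚ) : ℚ :=
  ∑ u ∈ Finset.range (a.deg + 1), a.coeff m u * y ^ u * x ^ (a.deg - u)

/-- The homogeneous polynomial `x + (q^m - 1) y` of degree 1. -/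
def polyXA (q : ℚ) : QPoly :=
  ⟨1, fun m u => if u = 0 then 1 else if u = 1 then q ^ m - 1 else 0⟩

/-- The homogeneous polynomial `x - y` of degree 1. -/
def polyXB : QPoly :=
  ⟨1, fun _ u => if u = 0 then 1 else if u = 1 then -1 else 0⟩

/-- The q⁻¹-derivative with respect to `y` of a two-variable function `g(x, y)`. -/
def qInvDerivY (q : ℚ) (g : ℚ → ℚ → ℚ) : ℚ → ℚ → ℚ :=
  fun x y => (g x (q⁻¹ * y) - g x y) / ((q⁻¹ - 1) * y)

namespace QThmAux

open Finset

lemma sig_succ (n : ℕ) : sig (n + 1) = sig n + n := by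
  rcases n with _ | m
  · decide
  · show (m + 2) * (m + 1) / 2 = (m + 1) * m / 2 + (m + 1)
    have h : (m + 2) * (m + 1) = (m + 1) * m + 2 * (m + 1) := by ring
    rw [h, Nat.add_mul_div_left _ _ (by norm_num : 0 < 2)]

variable {q : ℚ}

/-- numerator product -/
def Nq (q : ℚ) (l u : ℕ) : ℚ := ∏ i ∈ Finset.range u, (q ^ (l - i) - 1)

/-- denominator product -/
def Dq (q : ℚ) (u : ℕ) : ℚ := ∏ i ∈ Finset.range u, (q ^ (i + 1) - 1)

/-- Gaussian binomial gadget -/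
def cq (q : ℚ) (l u : ℕ) : ℚ := Nq q l u / Dq q u

lemma hq0 (hq : 1 < q) : q ≠ 0 := (zero_lt_one.trans hq).ne'

lemma pow_succ_sub_one_ne (hq : 1 < q) (n : ℕ) : q ^ (n + 1) - 1 ≠ 0 := by
  have : 1 < q ^ (n + 1) := one_lt_pow₀ hq (by omega)
  exact sub_ne_zero.mpr this.ne'

lemma Dq_ne_zero (hq : 1 < q) (u : ℕ) : Dq q u ≠ 0 :=
  Finset.prod_ne_zero_iff.mpr fun i _ => pow_succ_sub_one_ne hq i

lemma Nq_succ (l u : ℕ) : Nq q (l + 1) (u + 1) = (q ^ (l + 1) - 1) * Nq q l u := by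
  unfold Nq
  rw [Finset.prod_range_succ']
  simp only [Nat.succ_sub_succ, Nat.sub_zero]
  ring

lemma Nq_zero_of_lt (h : l < u) : Nq q l u = 0 := by
  apply Finset.prod_eq_zero (Finset.mem_range.mpr h)
  simp

lemma Dq_succ (u : ℕ) : Dq q (u + 1) = Dq q u * (q ^ (u + 1) - 1) := by
  unfold Dq; rw [Finset.prod_range_succ]

lemma cq_zero (l : ℕ) : cq q l 0 = 1 := by simp [cq, Nq, Dq]

lemma Nq_shift (l u : ℕ) : Nq q l (u + 1) = Nq q l u * (q ^ (l - u) - 1) := by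
  unfold Nq; rw [Finset.prod_range_succ]

lemma cq_pascal (hq : 1 < q) (l u : ℕ) :
    cq q (l + 1) (u + 1) = q ^ (u + 1) * cq q l (u + 1) + cq q l u := by
  have hD := Dq_ne_zero hq u
  have hE := pow_succ_sub_one_ne hq u
  have key : (q ^ (l + 1) - 1) * Nq q l u
      = q ^ (u + 1) * (Nq q l u * (q ^ (l - u) - 1)) + (q ^ (u + 1) - 1) * Nq q l u := by
    rcases le_or_gt u l with h | h
    · have hp : q ^ (u + 1) * q ^ (l - u) = q ^ (l + 1) := by
        rw [← pow_add]; congr 1; omega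
      linear_combination (-(Nq q l u)) * hp
    · rw [Nq_zero_of_lt h]; ring
  unfold cq
  rw [Nq_succ, Dq_succ, Nq_shift, key]
  field_simp

lemma cq_mul (hq : 1 < q) (l v : ℕ) :
    cq q (l + 1) (v + 1) * (q ^ (v + 1) - 1) = (q ^ (l + 1) - 1) * cq q l v := by
  have hD := Dq_ne_zero hq v
  have hE := pow_succ_sub_one_ne hq v
  unfold cq
  rw [Nq_succ, Dq_succ]
  field_simp


lemma alpha_succ (hq : 1 < q) (m : ℤ) (v : ℕ) :
    alphaQ q m (v + 1) = (q ^ m - 1) * q ^ v * alphaQ q (m - 1) v := by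
  have h0 : q ≠ 0 := hq0 hq
  unfold alphaQ
  rw [Finset.prod_range_succ']
  have h : ∀ i ∈ Finset.range v, q ^ m - q ^ ((((i : ℕ) + 1 : ℕ)) : ℤ)
      = q * (q ^ (m - 1) - q ^ (i : ℤ)) := by
    intro i _
    have h1 : q ^ ((((i : ℕ) + 1 : ℕ)) : ℤ) = q ^ (i : ℤ) * q := by
      push_cast
      rw [← zpow_add_one₀ h0]
    have h2 : q ^ m = q ^ (m - 1) * q := by
      rw [← zpow_add_one₀ h0, sub_add_cancel]
    rw [h1, h2]; ring
  rw [Finset.prod_congr rfl h, Finset.prod_mul_distrib, Finset.prod_const, Finset.card_range]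
  norm_num
  ring

lemma beta_succ (k ν : ℕ) :
    betaQ q (k + 1) (ν + 1) = (q ^ (k + 1) - 1) / (q - 1) * betaQ q k ν := by
  unfold betaQ
  rw [Finset.prod_range_succ']
  simp only [Nat.succ_sub_succ, Nat.sub_zero]
  ring

lemma degA (q' : ℚ) (l : ℕ) : (qPow q' (polyXA q') l).deg = l := by
  induction l with
  | zero => rfl
  | succ l ih => show (qPow q' (polyXA q') l).deg + (polyXA q').deg = l + 1; rw [ih]; rfl

lemma degB (q' : ℚ) (l : ℕ) : (qPow q' polyXB l).deg = l := by
  induction l with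
  | zero => rfl
  | succ l ih => show (qPow q' polyXB l).deg + polyXB.deg = l + 1; rw [ih]; rfl

lemma polyXA_deg (q' : ℚ) : (polyXA q').deg = 1 := rfl
lemma polyXA_coeff (q' : ℚ) (m : ℤ) (u : ℕ) :
    (polyXA q').coeff m u = if u = 0 then 1 else if u = 1 then q' ^ m - 1 else 0 := rfl
lemma polyXB_deg : polyXB.deg = 1 := rfl
lemma polyXB_coeff (m : ℤ) (u : ℕ) :
    polyXB.coeff m u = if u = 0 then 1 else if u = 1 then -1 else 0 := rfl

lemma coeffA (hq : 1 < q) (l : ℕ) : ∀ (m : ℤ) (u : ℕ),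
    (qPow q (polyXA q) l).coeff m u = cq q l u * alphaQ q m u := by
  induction l with
  | zero =>
    intro m u
    rcases u with _ | v
    · simp [qPow, qOne, cq_zero, alphaQ]
    · have : Nq q 0 (v + 1) = 0 := Nq_zero_of_lt (by omega)
      simp [qPow, qOne, cq, this]
  | succ l ih =>
    intro m u
    show (qMul q (qPow q (polyXA q) l) (polyXA q)).coeff m u = _
    simp only [qMul, polyXA_deg, polyXA_coeff]
    rcases u with _ | v
    · simp [ih, cq_zero, alphaQ]
    · rw [Finset.sum_range_succ, Finset.sum_range_succ]
      have hz : ∑ i ∈ Finset.range v,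
          q ^ (i * 1) * (qPow q (polyXA q) l).coeff m i *
            (if v + 1 - i = 0 then 1 else if v + 1 - i = 1 then q ^ (m - i) - 1 else 0) = 0 := by
        apply Finset.sum_eq_zero
        intro i hi
        have hi' := Finset.mem_range.mp hi
        have h1 : v + 1 - i ≠ 0 := by omega
        have h2 : v + 1 - i ≠ 1 := by omega
        simp [h1, h2]
      rw [hz, ih, ih]
      have hvv : v + 1 - v = 1 := by omega
      have hself : v + 1 - (v + 1) = 0 := by omega
      rw [hvv, hself]
      simp only [mul_one, reduceIte, one_ne_zero, if_false]
      rw [cq_pascal hq]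
      have hα : alphaQ q m (v + 1) = alphaQ q m v * (q ^ m - q ^ (v : ℤ)) :=
        Finset.prod_range_succ _ _
      have hv : q ^ v * (q ^ (m - (v:ℤ)) - 1) = q ^ m - q ^ (v : ℤ) := by
        have h0 : q ≠ 0 := hq0 hq
        rw [mul_sub, mul_one, ← zpow_natCast q v, ← zpow_add₀ h0]
        congr 2
        omega
      rw [hα]
      linear_combination (cq q l v * alphaQ q m v) * hv


lemma coeffB (hq : 1 < q) (l : ℕ) : ∀ (m : ℤ) (u : ℕ),
    (qPow q polyXB l).coeff m u = (-1) ^ u * q ^ sig u * cq q l u := by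
  induction l with
  | zero =>
    intro m u
    rcases u with _ | v
    · simp [qPow, qOne, cq_zero, sig]
    · have : Nq q 0 (v + 1) = 0 := Nq_zero_of_lt (by omega)
      simp [qPow, qOne, cq, this]
  | succ l ih =>
    intro m u
    show (qMul q (qPow q polyXB l) polyXB).coeff m u = _
    simp only [qMul, polyXB_deg, polyXB_coeff]
    rcases u with _ | v
    · simp [ih, cq_zero, sig]
    · rw [Finset.sum_range_succ, Finset.sum_range_succ]
      have hz : ∑ i ∈ Finset.range v,
          q ^ (i * 1) * (qPow q polyXB l).coeff m i *
            (if v + 1 - i = 0 then 1 else if v + 1 - i = 1 then -1 else 0) = 0 := by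
        apply Finset.sum_eq_zero
        intro i hi
        have hi' := Finset.mem_range.mp hi
        have h1 : v + 1 - i ≠ 0 := by omega
        have h2 : v + 1 - i ≠ 1 := by omega
        simp [h1, h2]
      rw [hz, ih, ih]
      have hvv : v + 1 - v = 1 := by omega
      have hself : v + 1 - (v + 1) = 0 := by omega
      rw [hvv, hself]
      simp only [mul_one, reduceIte, one_ne_zero, if_false]
      rw [cq_pascal hq]
      have hs : q ^ sig (v + 1) = q ^ sig v * q ^ v := by
        rw [← pow_add, sig_succ]
      rw [hs]
      ring

lemma evalA (hq : 1 < q) (l : ℕ) (m : ℤ) (x y : ℚ) :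
    (qPow q (polyXA q) l).eval m x y
      = ∑ u ∈ Finset.range (l + 1), cq q l u * alphaQ q m u * y ^ u * x ^ (l - u) := by
  unfold QPoly.eval
  rw [degA]
  exact Finset.sum_congr rfl fun u _ => by rw [coeffA hq]

lemma evalB (hq : 1 < q) (l : ℕ) (m : ℤ) (x y : ℚ) :
    (qPow q polyXB l).eval m x y
      = ∑ u ∈ Finset.range (l + 1), (-1) ^ u * q ^ sig u * cq q l u * y ^ u * x ^ (l - u) := by
  unfold QPoly.eval
  rw [degB]
  exact Finset.sum_congr rfl fun u _ => by rw [coeffB hq]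

lemma qInvDerivY_eq (g : ℚ → ℚ → ℚ) (x y : ℚ) :
    qInvDerivY q g x y = (g x (q⁻¹ * y) - g x y) / ((q⁻¹ - 1) * y) := rfl

lemma iter_congr (hq : 1 < q) (g₁ g₂ : ℚ → ℚ → ℚ)
    (h : ∀ x y, y ≠ 0 → g₁ x y = g₂ x y) :
    ∀ (ν : ℕ) (x y : ℚ), y ≠ 0 →
      (qInvDerivY q)^[ν] g₁ x y = (qInvDerivY q)^[ν] g₂ x y := by
  intro ν
  induction ν with
  | zero => intro x y hy; exact h x y hy
  | succ ν ihn =>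
    intro x y hy
    rw [Function.iterate_succ_apply', Function.iterate_succ_apply',
      qInvDerivY_eq, qInvDerivY_eq,
      ihn x y hy, ihn x (q⁻¹ * y) (mul_ne_zero (inv_ne_zero (hq0 hq)) hy)]

lemma iter_const (c : ℚ) (g : ℚ → ℚ → ℚ) :
    ∀ (ν : ℕ) (x y : ℚ),
      (qInvDerivY q)^[ν] (fun s t => c * g s t) x y = c * (qInvDerivY q)^[ν] g x y := by
  intro ν
  induction ν with
  | zero => intro x y; rfl
  | succ ν ihn =>
    intro x y
    rw [Function.iterate_succ_apply', Function.iterate_succ_apply',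
      qInvDerivY_eq, qInvDerivY_eq,
      ihn x y, ihn x (q⁻¹ * y), ← mul_sub, mul_div_assoc]

lemma hinv_ne (hq : 1 < q) : q⁻¹ - 1 ≠ 0 := by
  have h1 : q⁻¹ < 1 := by
    rw [inv_lt_one_iff₀]; right; exact hq
  exact sub_ne_zero.mpr h1.ne

lemma stepA (hq : 1 < q) (k : ℕ) (m : ℤ) (x y : ℚ) (hy : y ≠ 0) :
    qInvDerivY q (fun s t => (qPow q (polyXA q) (k + 1)).eval m s t) x y
      = (q ^ (k + 1) - 1) / (q - 1) * (q ^ m - 1) *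
          (qPow q (polyXA q) k).eval (m - 1) x y := by
  have h0 : q ≠ 0 := hq0 hq
  have h1 : q - 1 ≠ 0 := sub_ne_zero.mpr hq.ne'
  simp only [qInvDerivY]
  rw [div_eq_iff (mul_ne_zero (hinv_ne hq) hy)]
  rw [evalA hq, evalA hq, evalA hq, ← Finset.sum_sub_distrib, Finset.mul_sum,
    Finset.sum_mul, Finset.sum_range_succ']
  have h00 : cq q (k+1) 0 * alphaQ q m 0 * (q⁻¹ * y) ^ 0 * x ^ (k + 1 - 0) -
      cq q (k+1) 0 * alphaQ q m 0 * y ^ 0 * x ^ (k + 1 - 0) = 0 := by ring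
  rw [h00, add_zero]
  refine Finset.sum_congr rfl fun v hv => ?_
  have hk : k + 1 - (v + 1) = k - v := Nat.succ_sub_succ k v
  rw [hk]
  have hE := pow_succ_sub_one_ne hq v
  have hc' : cq q (k + 1) (v + 1) = (q ^ (k + 1) - 1) * cq q k v / (q ^ (v + 1) - 1) := by
    rw [eq_div_iff hE]; exact cq_mul hq k v
  rw [hc', alpha_succ hq, mul_pow]
  have hiv : (q⁻¹) ^ (v + 1) = (q ^ (v + 1))⁻¹ := by rw [inv_pow]
  rw [hiv]
  field_simp
  ring

lemma stepB (hq : 1 < q) (k : ℕ) (m : ℤ) (x y : ℚ) (hy : y ≠ 0) :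
    qInvDerivY q (fun s t => (qPow q polyXB (k + 1)).eval m s t) x y
      = (-(q ^ (k + 1) - 1) / (q - 1)) * (qPow q polyXB k).eval m x y := by
  have h0 : q ≠ 0 := hq0 hq
  have h1 : q - 1 ≠ 0 := sub_ne_zero.mpr hq.ne'
  simp only [qInvDerivY]
  rw [div_eq_iff (mul_ne_zero (hinv_ne hq) hy)]
  rw [evalB hq, evalB hq, evalB hq, ← Finset.sum_sub_distrib, Finset.mul_sum,
    Finset.sum_mul, Finset.sum_range_succ']
  have h00 : (-1:ℚ) ^ 0 * q ^ sig 0 * cq q (k+1) 0 * (q⁻¹ * y) ^ 0 * x ^ (k + 1 - 0) -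
      (-1:ℚ) ^ 0 * q ^ sig 0 * cq q (k+1) 0 * y ^ 0 * x ^ (k + 1 - 0) = 0 := by ring
  rw [h00, add_zero]
  refine Finset.sum_congr rfl fun v hv => ?_
  have hk : k + 1 - (v + 1) = k - v := Nat.succ_sub_succ k v
  rw [hk]
  have hE := pow_succ_sub_one_ne hq v
  have hc' : cq q (k + 1) (v + 1) = (q ^ (k + 1) - 1) * cq q k v / (q ^ (v + 1) - 1) := by
    rw [eq_div_iff hE]; exact cq_mul hq k v
  have hs : q ^ sig (v + 1) = q ^ sig v * q ^ v := by rw [← pow_add, sig_succ]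
  rw [hc', hs, mul_pow]
  have hiv : (q⁻¹) ^ (v + 1) = (q ^ (v + 1))⁻¹ := by rw [inv_pow]
  rw [hiv]
  field_simp
  ring

end QThmAux


/-- For `0 ≤ ν ≤ l`: the ν-th q⁻¹-derivative (w.r.t. `y`) of
`a_l(x,y;m) = [x+(q^m-1)y]^[l]` is `β(l,ν) q^(-σ_ν) α(m,ν) a_{l-ν}(x,y;m-ν)`, and that of
`b_l(x,y;m) = (x-y)^[l]` is `(-1)^ν β(l,ν) b_{l-ν}(x,y;m)`. -/
theorem qinv_derivative_of_basic_polynomials (q : ℕ) (hq : 2 ≤ q) :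
    (∀ l ν : ℕ, ν ≤ l → ∀ (m : ℤ) (x y : ℚ), y ≠ 0 →
      (qInvDerivY (q : ℚ))^[ν] (fun s t => (qPow (q : ℚ) (polyXA (q : ℚ)) l).eval m s t) x y =
        betaQ (q : ℚ) l ν * (q : ℚ) ^ (-(sig ν : ℤ)) * alphaQ (q : ℚ) m ν *
          (qPow (q : ℚ) (polyXA (q : ℚ)) (l - ν)).eval (m - ν) x y) ∧
    (∀ l ν : ℕ, ν ≤ l → ∀ (m : ℤ) (x y : ℚ), y ≠ 0 →
      (qInvDerivY (q : ℚ))^[ν] (fun s t => (qPow (q : ℚ) polyXB l).eval m s t) x y =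
        (-1) ^ ν * betaQ (q : ℚ) l ν * (qPow (q : ℚ) polyXB (l - ν)).eval m x y) := by
  have hq1 : (1 : ℚ) < (q : ℚ) := by exact_mod_cast (by omega : 1 < q)
  have h0 : (q : ℚ) ≠ 0 := QThmAux.hq0 hq1
  have hs0 : sig 0 = 0 := rfl
  constructor
  · intro l ν
    induction ν generalizing l with
    | zero =>
      intro _ m x y hy
      simp [betaQ, alphaQ, hs0]
    | succ ν ih =>
      intro hνl m x y hy
      obtain ⟨k, rfl⟩ : ∃ k, l = k + 1 := ⟨l - 1, by omega⟩
      rw [Function.iterate_succ_apply]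
      rw [QThmAux.iter_congr hq1 _
        (fun s t => ((q : ℚ) ^ (k + 1) - 1) / ((q : ℚ) - 1) * ((q : ℚ) ^ m - 1) *
          (qPow (q : ℚ) (polyXA (q : ℚ)) k).eval (m - 1) s t)
        (fun x' y' hy' => QThmAux.stepA hq1 k m x' y' hy') ν x y hy]
      rw [QThmAux.iter_const]
      rw [ih k (by omega) (m - 1) x y hy]
      have e1 : k + 1 - (ν + 1) = k - ν := Nat.succ_sub_succ _ _
      have e2 : m - ((ν + 1 : ℕ) : ℤ) = m - 1 - (ν : ℤ) := by push_cast; ring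
      have e3 : (-(sig (ν + 1) : ℤ)) = -(sig ν : ℤ) + -(ν : ℤ) := by
        rw [QThmAux.sig_succ]; push_cast; ring
      rw [e1, e2, e3, QThmAux.beta_succ, QThmAux.alpha_succ hq1, zpow_add₀ h0]
      have hql : (q : ℚ) ^ (-(ν : ℤ)) = ((q : ℚ) ^ (ν : ℕ))⁻¹ := by
        rw [zpow_neg, zpow_natCast]
      have hpne : (q : ℚ) ^ (ν : ℕ) ≠ 0 := pow_ne_zero _ h0
      have h1 : (q : ℚ) - 1 ≠ 0 := sub_ne_zero.mpr hq1.ne'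
      rw [hql]
      field_simp
  · intro l ν
    induction ν generalizing l with
    | zero =>
      intro _ m x y hy
      simp [betaQ]
    | succ ν ih =>
      intro hνl m x y hy
      obtain ⟨k, rfl⟩ : ∃ k, l = k + 1 := ⟨l - 1, by omega⟩
      rw [Function.iterate_succ_apply]
      rw [QThmAux.iter_congr hq1 _
        (fun s t => (-((q : ℚ) ^ (k + 1) - 1) / ((q : ℚ) - 1)) *
          (qPow (q : ℚ) polyXB k).eval m s t)
        (fun x' y' hy' => QThmAux.stepB hq1 k m x' y' hy') ν x y hy]
      rw [QThmAux.iter_const]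
      rw [ih k (by omega) m x y hy]
      have e1 : k + 1 - (ν + 1) = k - ν := Nat.succ_sub_succ _ _
      rw [e1, QThmAux.beta_succ, pow_succ]
      ring
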